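/- Let A = (A_1, …, A_m) be a POVM on ℂ^d with all elements nonzero, let C_1, …, C_γ be the connected components of the transition graph of A, and set P_α := Σ_{j ∈ C_α} A_j. Then (P_1, …, P_γ) is a PVM: each P_α is an orthogonal projection, P_α P_β = 0 for α ≠ β, and Σ_α P_α = I. In particular γ(A) ≤ d. -/

import Mathlib

open Matrix
open scoped ComplexOrder

def IsPOVM {d m : ℕ} (A : Fin m → Matrix (Fin d) (Fin d) ℂ) : Prop :=
  (∀ j, (A j).PosSemidef) ∧ ∑ j, A j = 1

def IsPVM {d m : ℕ} (A : Fin m → Matrix (Fin d) (Fin d) ℂ) : Prop :=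
  IsPOVM A ∧ (∀ j, A j * A j = A j) ∧ ∀ j k, j ≠ k → A j * A k = 0

/-- Transition graph of a POVM: distinct `j, k` adjacent iff `tr(A_j A_k) ≠ 0`. -/
def transitionGraph {d m : ℕ} (A : Fin m → Matrix (Fin d) (Fin d) ℂ) :
    SimpleGraph (Fin m) where
  Adj j k := j ≠ k ∧ (A j * A k).trace ≠ 0
  symm := by
    constructor
    intro j k h
    exact ⟨h.1.symm, by rw [Matrix.trace_mul_comm]; exact h.2⟩
  loopless := by constructor; intro j h; exact h.1 rfl

/-- Number of connected components of the transition graph. -/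
noncomputable def gammaPOVM {d m : ℕ} (A : Fin m → Matrix (Fin d) (Fin d) ℂ) : ℕ :=
  Nat.card (transitionGraph A).ConnectedComponent


open Matrix
open scoped ComplexOrder

-- auxiliary lemmas test
lemma trace_ctm (n p : Type*) [Fintype n] [Fintype p] (B : Matrix p n ℂ) :
    (Bᴴ * B).trace = ((∑ j, ∑ i, Complex.normSq (B i j) : ℝ) : ℂ) := by
  simp only [Matrix.trace, Matrix.diag, Matrix.mul_apply, Matrix.conjTranspose_apply]
  push_cast
  congr 1; ext j; congr 1; ext i
  rw [Complex.star_def, ← Complex.normSq_eq_conj_mul_self]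

open scoped MatrixOrder in
lemma psd_eq_ctm {d : ℕ} {X : Matrix (Fin d) (Fin d) ℂ} (hX : X.PosSemidef) :
    ∃ S : Matrix (Fin d) (Fin d) ℂ, X = Sᴴ * S := by
  obtain ⟨B, rfl⟩ := CStarAlgebra.nonneg_iff_eq_star_mul_self.mp hX.nonneg
  exact ⟨B, rfl⟩

lemma psd_trace_re_nonneg {d : ℕ} {X : Matrix (Fin d) (Fin d) ℂ} (hX : X.PosSemidef) :
    0 ≤ X.trace.re := by
  obtain ⟨S, rfl⟩ := psd_eq_ctm hX
  rw [trace_ctm, Complex.ofReal_re]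
  exact Finset.sum_nonneg fun j _ => Finset.sum_nonneg fun i _ => Complex.normSq_nonneg _

lemma psd_trace_re_eq_zero_iff {d : ℕ} {X : Matrix (Fin d) (Fin d) ℂ} (hX : X.PosSemidef) :
    X.trace.re = 0 ↔ X = 0 := by
  obtain ⟨S, rfl⟩ := psd_eq_ctm hX
  rw [trace_ctm, Complex.ofReal_re, Matrix.conjTranspose_mul_self_eq_zero]
  constructor
  · intro h
    have h2 : ∀ j ∈ Finset.univ, ∀ i ∈ Finset.univ, Complex.normSq (S i j) = 0 := by
      intro j _ i _
      have := (Finset.sum_eq_zero_iff_of_nonneg (fun j _ => Finset.sum_nonneg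
        (fun i _ => Complex.normSq_nonneg _))).mp h j (Finset.mem_univ j)
      exact (Finset.sum_eq_zero_iff_of_nonneg (fun i _ => Complex.normSq_nonneg _)).mp this i
        (Finset.mem_univ i)
    ext i j
    simpa using Complex.normSq_eq_zero.mp (h2 j (Finset.mem_univ j) i (Finset.mem_univ i))
  · rintro rfl; simp

lemma psd_mul_eq_zero_of_trace {d : ℕ} {X Y : Matrix (Fin d) (Fin d) ℂ}
    (hX : X.PosSemidef) (hY : Y.PosSemidef) (h : (X * Y).trace = 0) : X * Y = 0 := by
  obtain ⟨S, rfl⟩ := psd_eq_ctm hX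
  obtain ⟨T, rfl⟩ := psd_eq_ctm hY
  have key : S * Tᴴ = 0 := by
    have h2 : ((S * Tᴴ)ᴴ * (S * Tᴴ)).trace = 0 := by
      rw [Matrix.conjTranspose_mul, Matrix.conjTranspose_conjTranspose]
      calc (T * Sᴴ * (S * Tᴴ)).trace = (T * (Sᴴ * (S * Tᴴ))).trace := by
            rw [Matrix.mul_assoc]
        _ = ((Sᴴ * (S * Tᴴ)) * T).trace := Matrix.trace_mul_comm _ _
        _ = (Sᴴ * S * (Tᴴ * T)).trace := by simp only [Matrix.mul_assoc]
        _ = 0 := h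
    have h3 := (psd_trace_re_eq_zero_iff (Matrix.posSemidef_conjTranspose_mul_self (S * Tᴴ))).mp
      (by rw [h2]; simp)
    rwa [Matrix.conjTranspose_mul_self_eq_zero] at h3
  calc Sᴴ * S * (Tᴴ * T) = Sᴴ * (S * Tᴴ) * T := by simp only [Matrix.mul_assoc]
    _ = 0 := by rw [key, Matrix.mul_zero, Matrix.zero_mul]


lemma proj_trace_re_ge_one {d : ℕ} {Q : Matrix (Fin d) (Fin d) ℂ}
    (hH : Q.IsHermitian) (hQ : Q * Q = Q) (h0 : Q ≠ 0) : 1 ≤ Q.trace.re := by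
  classical
  -- eigenvalues are 0 or 1
  have heig : ∀ i, hH.eigenvalues i * hH.eigenvalues i = hH.eigenvalues i := by
    intro i
    set v : Fin d → ℂ := ⇑(hH.eigenvectorBasis i) with hv
    have hvne : v ≠ 0 := by
      intro h
      exact hH.eigenvectorBasis.orthonormal.ne_zero i (by ext x; exact congrFun h x)
    have h1 : Q *ᵥ v = hH.eigenvalues i • v := hH.mulVec_eigenvectorBasis i
    have h2 : (hH.eigenvalues i * hH.eigenvalues i) • v = hH.eigenvalues i • v := by
      have : Q *ᵥ (Q *ᵥ v) = Q *ᵥ v := by rw [Matrix.mulVec_mulVec, hQ]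
      rw [h1, Matrix.mulVec_smul, h1, smul_smul] at this
      exact this
    have h3 : (hH.eigenvalues i * hH.eigenvalues i - hH.eigenvalues i) • v = 0 := by
      rw [sub_smul, h2, sub_self]
    rcases smul_eq_zero.mp h3 with h4 | h4
    · linarith [sub_eq_zero.mp (by exact_mod_cast h4)]
    · exact absurd h4 hvne
  -- trace = sum of eigenvalues
  have htr : Q.trace = ∑ i, (hH.eigenvalues i : ℂ) := by
    calc Q.trace = ((hH.eigenvectorUnitary : Matrix (Fin d) (Fin d) ℂ) *
          (diagonal (RCLike.ofReal ∘ hH.eigenvalues) *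
            (star (hH.eigenvectorUnitary : Matrix (Fin d) (Fin d) ℂ)))).trace := by
          conv_lhs => rw [hH.spectral_theorem, Unitary.conjStarAlgAut_apply]
          rw [Matrix.mul_assoc]
      _ = ((diagonal (RCLike.ofReal ∘ hH.eigenvalues) *
            (star (hH.eigenvectorUnitary : Matrix (Fin d) (Fin d) ℂ))) *
          (hH.eigenvectorUnitary : Matrix (Fin d) (Fin d) ℂ)).trace := Matrix.trace_mul_comm _ _
      _ = (diagonal (RCLike.ofReal ∘ hH.eigenvalues)).trace := by
          rw [Matrix.mul_assoc, (Matrix.mem_unitaryGroup_iff').mp hH.eigenvectorUnitary.2,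
            Matrix.mul_one]
      _ = ∑ i, (hH.eigenvalues i : ℂ) := by rw [Matrix.trace_diagonal]; rfl
  -- some eigenvalue nonzero
  have hne : ∃ i, hH.eigenvalues i ≠ 0 := by
    by_contra h
    push_neg at h
    apply h0
    rw [hH.spectral_theorem, Unitary.conjStarAlgAut_apply]
    have : (RCLike.ofReal ∘ hH.eigenvalues : Fin d → ℂ) = 0 := by
      ext i; simp [h i]
    rw [this, show (Matrix.diagonal (0 : Fin d → ℂ)) = 0 from Matrix.diagonal_zero,
      Matrix.mul_zero, Matrix.zero_mul]
  obtain ⟨i, hi⟩ := hne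
  have heig' : ∀ j, hH.eigenvalues j = 0 ∨ hH.eigenvalues j = 1 := by
    intro j
    have h2 : hH.eigenvalues j * (hH.eigenvalues j - 1) = 0 := by
      have := heig j; ring_nf; linarith [this]
    rcases mul_eq_zero.mp h2 with h' | h'
    · exact Or.inl h'
    · exact Or.inr (by linarith [sub_eq_zero.mp h'])
  have hi1 : hH.eigenvalues i = 1 := (heig' i).resolve_left hi
  have hre : Q.trace.re = ∑ j, hH.eigenvalues j := by
    rw [htr]
    rw [Complex.re_sum]
    simp
  rw [hre]
  calc (1:ℝ) = hH.eigenvalues i := hi1.symm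
    _ ≤ ∑ j, hH.eigenvalues j := by
        apply Finset.single_le_sum (fun j _ => ?_) (Finset.mem_univ i)
        rcases heig' j with h | h <;> rw [h] <;> norm_num


/-- Summing a POVM over the connected components of its transition graph yields a
PVM; in particular `γ(A) ≤ d`. -/
theorem stmt_1 {d m : ℕ}
    (A : Fin m → Matrix (Fin d) (Fin d) ℂ)
    (hA : IsPOVM A) (hA0 : ∀ j, A j ≠ 0)
    (P : (transitionGraph A).ConnectedComponent → Matrix (Fin d) (Fin d) ℂ)
    (hP : ∀ c, P c = ∑ᶠ j ∈ {j | (transitionGraph A).connectedComponentMk j = c}, A j) :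
    (∀ c, (P c).IsHermitian ∧ P c * P c = P c) ∧
    (∀ c c', c ≠ c' → P c * P c' = 0) ∧
    (∑ᶠ c, P c = 1) ∧
    gammaPOVM A ≤ d := by
  classical
  obtain ⟨hpsd, hsum⟩ := hA
  letI : Fintype (transitionGraph A).ConnectedComponent := Fintype.ofFinite _
  have hPfin : ∀ c, P c =
      ∑ j ∈ Finset.univ.filter (fun j => (transitionGraph A).connectedComponentMk j = c), A j := by
    intro c
    rw [hP c]
    have hset : {j | (transitionGraph A).connectedComponentMk j = c} =
        ↑(Finset.univ.filter (fun j => (transitionGraph A).connectedComponentMk j = c)) := by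
      ext j; simp
    rw [hset, finsum_mem_coe_finset]
  -- cross terms vanish
  have hzero : ∀ j k : Fin m, (transitionGraph A).connectedComponentMk j ≠ (transitionGraph A).connectedComponentMk k →
      A j * A k = 0 := by
    intro j k hne
    have hjk : j ≠ k := fun h => hne (by rw [h])
    have hnadj : ¬ (transitionGraph A).Adj j k := fun h =>
      hne (SimpleGraph.ConnectedComponent.connectedComponentMk_eq_of_adj h)
    have htr : (A j * A k).trace = 0 := by
      by_contra h
      exact hnadj ⟨hjk, h⟩
    exact psd_mul_eq_zero_of_trace (hpsd j) (hpsd k) htr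
  have horth : ∀ c c', c ≠ c' → P c * P c' = 0 := by
    intro c c' hne
    rw [hPfin, hPfin, Finset.sum_mul_sum]
    apply Finset.sum_eq_zero
    intro j hj
    apply Finset.sum_eq_zero
    intro k hk
    simp only [Finset.mem_filter] at hj hk
    exact hzero j k (by rw [hj.2, hk.2]; exact hne)
  have hsum1 : ∑ c, P c = 1 := by
    calc ∑ c, P c
        = ∑ c, ∑ j ∈ Finset.univ.filter (fun j => (transitionGraph A).connectedComponentMk j = c), A j := by
          exact Finset.sum_congr rfl fun c _ => hPfin c
      _ = ∑ j, A j := Finset.sum_fiberwise _ _ _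
      _ = 1 := hsum
  have hid : ∀ c, P c * P c = P c := by
    intro c
    have h1 : P c * (∑ c', P c') = P c := by rw [hsum1, mul_one]
    rw [Finset.mul_sum, Finset.sum_eq_single c
      (fun c' _ hne => horth c c' (Ne.symm hne)) (fun h => absurd (Finset.mem_univ c) h)] at h1
    exact h1
  have hherm : ∀ c, (P c).IsHermitian := by
    intro c
    rw [hPfin]
    show (∑ j ∈ _, A j)ᴴ = ∑ j ∈ _, A j
    rw [Matrix.conjTranspose_sum]
    exact Finset.sum_congr rfl fun j _ => (hpsd j).1
  refine ⟨fun c => ⟨hherm c, hid c⟩, horth, ?_, ?_⟩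
  · rw [finsum_eq_sum_of_fintype, hsum1]
  -- gamma ≤ d
  have hPpsd_tr : ∀ c, (1:ℝ) ≤ (P c).trace.re := by
    intro c
    apply proj_trace_re_ge_one (hherm c) (hid c)
    obtain ⟨j₀, hj₀⟩ := c.exists_rep
    intro hPc
    have h0 : (P c).trace.re = 0 := by rw [hPc]; simp
    have htr : (P c).trace.re =
        ∑ j ∈ Finset.univ.filter (fun j => (transitionGraph A).connectedComponentMk j = c), (A j).trace.re := by
      rw [hPfin, Matrix.trace_sum, Complex.re_sum]
    have hmem : j₀ ∈ Finset.univ.filter (fun j => (transitionGraph A).connectedComponentMk j = c) := by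
      simp only [Finset.mem_filter, Finset.mem_univ, true_and]
      exact hj₀
    have hpos : 0 < (P c).trace.re := by
      rw [htr]
      apply Finset.sum_pos' (fun j _ => psd_trace_re_nonneg (hpsd j))
      refine ⟨j₀, hmem, ?_⟩
      rcases lt_or_eq_of_le (psd_trace_re_nonneg (hpsd j₀)) with h | h
      · exact h
      · exact absurd ((psd_trace_re_eq_zero_iff (hpsd j₀)).mp h.symm) (hA0 j₀)
    exact absurd h0 (ne_of_gt hpos)
  have hcard : (Fintype.card (transitionGraph A).ConnectedComponent : ℝ) ≤ d := by
    have hsumtr : ∑ c, (P c).trace.re = (d : ℝ) := by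
      have : (∑ c, P c).trace = (1 : Matrix (Fin d) (Fin d) ℂ).trace := by rw [hsum1]
      rw [Matrix.trace_sum] at this
      have := congrArg Complex.re this
      rw [Complex.re_sum] at this
      rw [this]
      simp [Matrix.trace_one]
    calc (Fintype.card (transitionGraph A).ConnectedComponent : ℝ)
        = ∑ _c : (transitionGraph A).ConnectedComponent, (1:ℝ) := by simp
      _ ≤ ∑ c, (P c).trace.re := Finset.sum_le_sum fun c _ => hPpsd_tr c
      _ = d := hsumtr
  have : gammaPOVM A = Fintype.card (transitionGraph A).ConnectedComponent := Nat.card_eq_fintype_card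
  rw [this]
  exact_mod_cast hcard
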